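/- Let $w$ be a weight with $W(t)=\int_0^t w$, $0<p<\infty$. If $w$ satisfies the restricted weak-type Hardy inequality on decreasing functions, i.e., for every $r>0$ and $\lambda>0$, $w(\{t>0: S\chi_{(0,r)}(t)>\lambda\})\le C\,W(r)/\lambda^p$ where $Sf(t)=\frac1t\int_0^t f$, then $w$ satisfies $R_p$: $\frac{1}{s^p}W(s)\le \frac{C'}{r^p}W(r)$ for all $0<r<s<\infty$; and conversely $R_p$ implies the restricted weak-type inequality. -/

import Mathlib

open MeasureTheory Set

lemma aux_int (r t : ℝ) (hr : 0 < r) (ht : 0 < t) :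
    (∫ s in Set.Ioc 0 t, Set.indicator (Set.Ioo 0 r) (fun _ => (1 : ℝ)) s) = min t r := by
  rw [MeasureTheory.setIntegral_indicator measurableSet_Ioo, MeasureTheory.setIntegral_const,
    smul_eq_mul, mul_one]
  rcases lt_or_ge t r with h | h
  · have : Set.Ioc 0 t ∩ Set.Ioo 0 r = Set.Ioc 0 t := by
      apply Set.inter_eq_left.mpr
      intro x hx
      exact ⟨hx.1, lt_of_le_of_lt hx.2 h⟩
    rw [this, measureReal_def, Real.volume_Ioc, min_eq_left h.le, sub_zero, ENNReal.toReal_ofReal ht.le]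
  · have : Set.Ioc 0 t ∩ Set.Ioo 0 r = Set.Ioo 0 r := by
      apply Set.inter_eq_right.mpr
      intro x hx
      exact ⟨hx.1, le_trans hx.2.le h⟩
    rw [this, measureReal_def, Real.volume_Ioo, min_eq_right h, sub_zero, ENNReal.toReal_ofReal hr.le]

lemma aux_set (r lam : ℝ) (hr : 0 < r) (hlam : 0 < lam) (h1 : lam < 1) :
    {t : ℝ | 0 < t ∧
        lam < (1 / t) * ∫ s in Set.Ioc 0 t, Set.indicator (Set.Ioo 0 r) (fun _ => (1 : ℝ)) s}
      = Set.Ioo 0 (r / lam) := by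
  ext t
  simp only [Set.mem_setOf_eq, Set.mem_Ioo]
  constructor
  · rintro ⟨ht, hlt⟩
    refine ⟨ht, ?_⟩
    rw [aux_int r t hr ht, one_div, inv_mul_eq_div, lt_div_iff₀ ht] at hlt
    have : lam * t < r := lt_of_lt_of_le hlt (min_le_right t r)
    rw [lt_div_iff₀ hlam]
    linarith [this, mul_comm lam t]
  · rintro ⟨ht, htr⟩
    refine ⟨ht, ?_⟩
    rw [aux_int r t hr ht, one_div, inv_mul_eq_div, lt_div_iff₀ ht, lt_min_iff]
    constructor
    · nlinarith
    · rw [lt_div_iff₀ hlam] at htr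
      linarith [mul_comm t lam]

lemma aux_empty (r lam : ℝ) (hr : 0 < r) (h1 : 1 ≤ lam) :
    {t : ℝ | 0 < t ∧
        lam < (1 / t) * ∫ s in Set.Ioc 0 t, Set.indicator (Set.Ioo 0 r) (fun _ => (1 : ℝ)) s}
      = ∅ := by
  ext t
  simp only [Set.mem_setOf_eq, Set.mem_empty_iff_false, iff_false, not_and, not_lt]
  intro ht
  rw [aux_int r t hr ht, one_div, inv_mul_eq_div]
  have : min t r / t ≤ 1 := by
    rw [div_le_one ht]
    exact min_le_left t r
  linarith

/-- A weight `w` satisfies the restricted weak-type Hardy inequality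
`w({S χ_{(0,r)} > λ}) ≤ C W(r)/λ^p` if and only if it satisfies the `R_p` condition
`W(s)/s^p ≤ C' W(r)/r^p` for `0 < r < s`. -/
theorem stmt_6 (w W : ℝ → ℝ) (p : ℝ) (hp : 0 < p)
    (hw_nonneg : ∀ x, 0 ≤ w x)
    (hw_meas : Measurable w)
    (hw_loc : ∀ t > 0, IntegrableOn w (Set.Ioc 0 t))
    (hW : ∀ t, W t = ∫ s in Set.Ioc 0 t, w s) :
    (∃ C > 0, ∀ r > 0, ∀ lam > 0,
        (∫ t in {t : ℝ | 0 < t ∧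
            lam < (1 / t) * ∫ s in Set.Ioc 0 t, Set.indicator (Set.Ioo 0 r) (fun _ => (1 : ℝ)) s},
          w t) ≤ C * W r / lam ^ p) ↔
    (∃ C > 0, ∀ r s : ℝ, 0 < r → r < s → W s / s ^ p ≤ C * (W r / r ^ p)) := by
  constructor
  · rintro ⟨C, hC, h⟩
    refine ⟨C, hC, fun r s hr hrs => ?_⟩
    have hs : 0 < s := lt_trans hr hrs
    have hlam : 0 < r / s := div_pos hr hs
    have h1 : r / s < 1 := (div_lt_one hs).mpr hrs
    have key := h r hr (r / s) hlam
    rw [aux_set r (r / s) hr hlam h1] at key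
    have hrs' : r / (r / s) = s := by field_simp
    rw [hrs', ← MeasureTheory.integral_Ioc_eq_integral_Ioo, ← hW s] at key
    have hsp : (0:ℝ) < s ^ p := Real.rpow_pos_of_pos hs p
    have hrp : (0:ℝ) < r ^ p := Real.rpow_pos_of_pos hr p
    rw [div_le_iff₀ hsp]
    calc W s ≤ C * W r / (r / s) ^ p := key
      _ = C * (W r / r ^ p) * s ^ p := by
          rw [Real.div_rpow hr.le hs.le]
          field_simp
  · rintro ⟨C, hC, h⟩
    refine ⟨C, hC, fun r hr lam hlam => ?_⟩
    have hWr : 0 ≤ W r := by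
      rw [hW]
      exact setIntegral_nonneg measurableSet_Ioc (fun x _ => hw_nonneg x)
    have hlp : (0:ℝ) < lam ^ p := Real.rpow_pos_of_pos hlam p
    have hrp : (0:ℝ) < r ^ p := Real.rpow_pos_of_pos hr p
    rcases lt_or_ge lam 1 with h1 | h1
    · rw [aux_set r lam hr hlam h1, ← MeasureTheory.integral_Ioc_eq_integral_Ioo, ← hW]
      have hrl : r < r / lam := by
        rw [lt_div_iff₀ hlam]
        nlinarith
      have key := h r (r / lam) hr hrl
      have hrlp : (0:ℝ) < (r / lam) ^ p := Real.rpow_pos_of_pos (div_pos hr hlam) p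
      rw [div_le_iff₀ hrlp] at key
      calc W (r / lam) ≤ C * (W r / r ^ p) * (r / lam) ^ p := key
        _ = C * W r / lam ^ p := by
            rw [Real.div_rpow hr.le hlam.le]
            field_simp
    · rw [aux_empty r lam hr h1]
      simp only [Measure.restrict_empty, integral_zero_measure]
      positivity
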